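/- arXiv:1705.01586 — 3 statements merged into one kernel-verified Lean document; each statement's English description precedes it below -/
import Mathlib

section
/- Let G be a nontrivial torsion-free group in which every non-identity element lies in a unique maximal cyclic subgroup. Then the set of maximal cyclic subgroups of G either has exactly one element or is infinite; equivalently, if G has only finitely many maximal cyclic subgroups, then G is cyclic. -/
/-- The power graph of a group `G`: distinct `x, y` are adjacent iff one is a
nonzero integer power of the other. -/
def powerGraph (G : Type*) [Group G] : SimpleGraph G where
  Adj x y := x ≠ y ∧ ∃ n : ℤ, n ≠ 0 ∧ (y = x ^ n ∨ x = y ^ n)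
  symm := ⟨by
    rintro x y ⟨hxy, n, hn, h⟩
    exact ⟨hxy.symm, n, hn, h.symm⟩⟩
  loopless := ⟨by rintro x ⟨h, -⟩; exact h rfl⟩

/-- There is an arc `x → y` in the directed power graph iff `x ≠ y` and `y` is a
nonzero integer power of `x`. -/
def powArc {G : Type*} [Group G] (x y : G) : Prop :=
  x ≠ y ∧ ∃ n : ℤ, n ≠ 0 ∧ y = x ^ n

/-- A maximal cyclic subgroup: a cyclic subgroup not properly contained in any
cyclic subgroup. -/
def IsMaxCyclic {G : Type*} [Group G] (C : Subgroup G) : Prop :=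
  IsCyclic C ∧ ∀ D : Subgroup G, IsCyclic D → C ≤ D → C = D

private lemma aux_zpow_ne_one {G : Type*} [Group G] {y : G} (h : ¬ IsOfFinOrder y)
    {a : ℤ} (ha : a ≠ 0) : y ^ a ≠ 1 := by
  intro he
  rw [← orderOf_eq_zero_iff] at h
  have := orderOf_dvd_iff_zpow_eq_one.mpr he
  rw [h] at this
  simp at this
  exact ha this

/-- If `G` is a nontrivial torsion-free group in which every non-identity
element lies in a unique maximal cyclic subgroup, then the set of maximal cyclic
subgroups of `G` has exactly one element or is infinite; equivalently, if it is
finite then `G` is cyclic. -/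
theorem stmt_10 (G : Type*) [Group G] [Nontrivial G]
    (htf : ∀ g : G, g ≠ 1 → ¬ IsOfFinOrder g)
    (hG : ∀ g : G, g ≠ 1 → ∃! C : Subgroup G, IsMaxCyclic C ∧ g ∈ C) :
    ((∃! C : Subgroup G, IsMaxCyclic C) ∨
        {C : Subgroup G | IsMaxCyclic C}.Infinite) ∧
      ({C : Subgroup G | IsMaxCyclic C}.Finite → IsCyclic G) := by
  classical
  set S := {C : Subgroup G | IsMaxCyclic C} with hS
  by_cases hfin : S.Finite
  · -- key: all M's coincide
    -- define M
    have hMdef : ∀ g : G, g ≠ 1 → ∃ C : Subgroup G, (IsMaxCyclic C ∧ g ∈ C) ∧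
        ∀ D : Subgroup G, IsMaxCyclic D ∧ g ∈ D → D = C := by
      intro g hg
      obtain ⟨C, hC, hu⟩ := hG g hg
      exact ⟨C, hC, hu⟩
    choose M hM hMu using fun (g : G) (hg : g ≠ 1) => hMdef g hg
    have key : ∀ x : G, ∀ hx : x ≠ 1, ∀ y : G, ∀ hy : y ≠ 1, M x hx = M y hy := by
      intro x hx y hy
      have hyo : ¬ IsOfFinOrder y := htf y hy
      -- the set of n with x * y ^ n = 1 is subsingleton
      have hsub : ({n : ℤ | x * y ^ n = 1}).Subsingleton := by
        intro a ha b hb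
        simp only [Set.mem_setOf_eq] at ha hb
        by_contra hab
        have : y ^ (a - b) = 1 := by
          have : x * y ^ a = x * y ^ b := by rw [ha, hb]
          have h2 : y ^ a = y ^ b := mul_left_cancel this
          rw [zpow_sub, h2]
          group
        exact aux_zpow_ne_one hyo (sub_ne_zero.mpr hab) this
      have hA : ({n : ℤ | x * y ^ n ≠ 1}).Infinite := by
        have : ({n : ℤ | x * y ^ n = 1}).Finite := hsub.finite
        exact this.infinite_compl
      -- pigeonhole
      have hmaps : Set.MapsTo (fun n : ℤ => if h : x * y ^ n ≠ 1 then M _ h else ⊥)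
          {n : ℤ | x * y ^ n ≠ 1} S := by
        intro n hn
        simp only [Set.mem_setOf_eq] at hn
        show (if h : x * y ^ n ≠ 1 then M _ h else ⊥) ∈ S
        rw [dif_pos hn]
        exact (hM _ hn).1
      obtain ⟨n, hn, m, hm, hnm, heq⟩ := hA.exists_ne_map_eq_of_mapsTo hmaps hfin
      simp only [Set.mem_setOf_eq] at hn hm
      rw [dif_pos hn, dif_pos hm] at heq
      set C := M _ hn with hCdef
      have hmC : x * y ^ m ∈ C := heq ▸ (hM _ hm).2
      have hnC : x * y ^ n ∈ C := (hM _ hn).2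
      have hCmax : IsMaxCyclic C := (hM _ hn).1
      have hyk : y ^ (m - n) ∈ C := by
        have := C.mul_mem (C.inv_mem hnC) hmC
        have he : (x * y ^ n)⁻¹ * (x * y ^ m) = y ^ (m - n) := by
          rw [zpow_sub]; group
        rwa [he] at this
      have hykne : y ^ (m - n) ≠ 1 := aux_zpow_ne_one hyo (sub_ne_zero.mpr (Ne.symm hnm))
      -- y ^ (m-n) ∈ M y, so C = M y
      have hyMy : y ^ (m - n) ∈ M y hy := Subgroup.zpow_mem _ (hM y hy).2 _
      have hCMy : C = M (y ^ (m - n)) hykne := hMu _ hykne C ⟨hCmax, hyk⟩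
      have hMyeq : M y hy = M (y ^ (m - n)) hykne :=
        hMu _ hykne (M y hy) ⟨(hM y hy).1, hyMy⟩
      have hCy : C = M y hy := hCMy.trans hMyeq.symm
      -- x ∈ C
      have hynC : y ^ (n : ℤ) ∈ C := by rw [hCy]; exact Subgroup.zpow_mem _ (hM y hy).2 _
      have hxC : x ∈ C := by
        have := C.mul_mem hnC (C.inv_mem hynC)
        simpa using this
      have hxc : C = M x hx := hMu x hx C ⟨hCmax, hxC⟩
      rw [← hxc, hCy]
    -- get base element
    obtain ⟨g₀, hg₀⟩ := exists_ne (1 : G)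
    set C := M g₀ hg₀ with hC
    have hCtop : C = ⊤ := by
      rw [Subgroup.eq_top_iff']
      intro g
      by_cases hg : g = 1
      · rw [hg]; exact C.one_mem
      · have hk := key g hg g₀ hg₀
        rw [hC, ← hk]
        exact (hM g hg).2
    have hcyc : IsCyclic G := by
      have : IsCyclic C := (hM g₀ hg₀).1.1
      rw [hCtop] at this
      exact isCyclic_of_surjective _ Subgroup.topEquiv.surjective
    refine ⟨Or.inl ⟨C, (hM g₀ hg₀).1, ?_⟩, fun _ => hcyc⟩
    intro D hD
    rcases D.bot_or_exists_ne_one with hbot | ⟨d, hdD, hd⟩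
    · exfalso
      have : D = C := hD.2 C (hM g₀ hg₀).1.1 (hbot ▸ bot_le)
      have : g₀ ∈ D := this ▸ (hM g₀ hg₀).2
      rw [hbot] at this
      exact hg₀ (Subgroup.mem_bot.mp this)
    · have h1 : D = M d hd := hMu d hd D ⟨hD, hdD⟩
      rw [h1]
      exact key d hd g₀ hg₀
  · exact ⟨Or.inr hfin, fun h => absurd h hfin⟩
end

section
/- Let G₁ and G₂ be countable torsion-free groups, neither of which is cyclic, such that in each of G₁ and G₂ every non-identity element lies in a unique maximal cyclic subgroup. Then the power graphs P(G₁) and P(G₂) are isomorphic. In particular, the groups ℤⁿ for all integers n ≥ 2 have pairwise isomorphic power graphs. -/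
universe u v

/-- The power graph of an additive group `G`: distinct `x, y` are adjacent iff
one is a nonzero integer multiple of the other. -/
def addPowerGraph (G : Type*) [AddGroup G] : SimpleGraph G where
  Adj x y := x ≠ y ∧ ∃ n : ℤ, n ≠ 0 ∧ (y = n • x ∨ x = n • y)
  symm := ⟨by
    rintro x y ⟨hxy, n, hn, h⟩
    exact ⟨hxy.symm, n, hn, h.symm⟩⟩
  loopless := ⟨by rintro x ⟨h, -⟩; exact h rfl⟩

/-- There is an arc `x → y` in the directed power graph of an additive group iff
`x ≠ y` and `y` is a nonzero integer multiple of `x`. -/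
def addPowArc {G : Type*} [AddGroup G] (x y : G) : Prop :=
  x ≠ y ∧ ∃ n : ℤ, n ≠ 0 ∧ y = n • x

/-! ### Auxiliary material -/

open Subgroup

/-- The canonical model graph: one isolated vertex (`none`) together with
countably many copies of the divisibility graph on nonzero integers. -/
def PGModel : SimpleGraph (Option (ℕ × {k : ℤ // k ≠ 0})) where
  Adj x y := x ≠ y ∧ ∃ (i : ℕ) (a b : {k : ℤ // k ≠ 0}),
      x = some (i, a) ∧ y = some (i, b) ∧ (a.1 ∣ b.1 ∨ b.1 ∣ a.1)
  symm := ⟨by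
    rintro x y ⟨h, i, a, b, hx, hy, hab⟩
    exact ⟨h.symm, i, b, a, hy, hx, hab.symm⟩⟩
  loopless := ⟨by rintro x ⟨h, -⟩; exact h rfl⟩

lemma isCyclic_zpowers {G : Type*} [Group G] (g : G) : IsCyclic (Subgroup.zpowers g) := by
  constructor
  refine ⟨⟨g, Subgroup.mem_zpowers g⟩, ?_⟩
  rintro ⟨x, hx⟩
  obtain ⟨k, hk⟩ := Subgroup.mem_zpowers_iff.1 hx
  exact Subgroup.mem_zpowers_iff.2 ⟨k, by ext; simpa using hk⟩

lemma eq_zpowers_of_isCyclic {G : Type*} [Group G] (D : Subgroup G) (h : IsCyclic D) :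
    ∃ w : G, D = Subgroup.zpowers w := by
  obtain ⟨⟨w, hw⟩, hgen⟩ := h.exists_generator
  refine ⟨w, le_antisymm ?_ (Subgroup.zpowers_le.2 hw)⟩
  intro x hx
  obtain ⟨k, hk⟩ := Subgroup.mem_zpowers_iff.1 (hgen ⟨x, hx⟩)
  refine Subgroup.mem_zpowers_iff.2 ⟨k, ?_⟩
  simpa using congrArg Subtype.val hk

noncomputable def cyclicIntEquiv {H : Type*} [Group H] (h1 : IsCyclic H) (h2 : Infinite H) :
    H ≃* Multiplicative ℤ :=
  @mulEquivOfCyclicCardEq _ _ _ _ h1 _ (by simp [Nat.card_eq_zero_of_infinite])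

lemma isOfFinOrder_of_zpow {G : Type*} [Group G] {h : G} {n : ℤ} (hn : n ≠ 0)
    (hpow : h ^ n = 1) : IsOfFinOrder h := by
  refine isOfFinOrder_iff_pow_eq_one.2 ⟨n.natAbs, Int.natAbs_pos.2 hn, ?_⟩
  have : h ^ (n.natAbs : ℤ) = 1 := by
    rcases Int.natAbs_eq n with h' | h'
    · rw [← h']; exact hpow
    · rw [show (n.natAbs : ℤ) = -n by omega, zpow_neg, hpow, inv_one]
  simpa [zpow_natCast] using this

/-- The key structural lemma: a countable, non-cyclic, torsion-free group in which
every non-identity element lies in a unique maximal cyclic subgroup has power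
graph isomorphic to the canonical model. -/
theorem iso_model (G : Type*) [Group G] [Countable G]
    (htf : ∀ g : G, g ≠ 1 → ¬ IsOfFinOrder g)
    (hnc : ¬ IsCyclic G)
    (hu : ∀ g : G, g ≠ 1 → ∃! C : Subgroup G, IsMaxCyclic C ∧ g ∈ C) :
    Nonempty (powerGraph G ≃g PGModel) := by
  classical
  choose mC hmC humC using hu
  have maxC : ∀ (g : G) (hg : g ≠ 1), IsMaxCyclic (mC g hg) := fun g hg => (hmC g hg).1
  have memC : ∀ (g : G) (hg : g ≠ 1), g ∈ mC g hg := fun g hg => (hmC g hg).2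
  have uniqC : ∀ (g : G) (hg : g ≠ 1) (C : Subgroup G), IsMaxCyclic C → g ∈ C →
      C = mC g hg := fun g hg C h1 h2 => humC g hg C ⟨h1, h2⟩
  have botC : ∀ (g : G) (hg : g ≠ 1), mC g hg ≠ ⊥ := by
    intro g hg h
    exact hg (Subgroup.mem_bot.1 (h ▸ memC g hg))
  set S := {C : Subgroup G // IsMaxCyclic C ∧ C ≠ ⊥} with hSdef
  let SC : ∀ (g : G), g ≠ 1 → S := fun g hg => ⟨mC g hg, maxC g hg, botC g hg⟩
  have exS : ∀ D : S, ∃ (g : G) (hg : g ≠ 1), g ∈ D.1 ∧ SC g hg = D := by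
    rintro ⟨C, hmax, hbot⟩
    rcases C.bot_or_exists_ne_one with h | ⟨g, hgC, hg⟩
    · exact absurd h hbot
    · exact ⟨g, hg, hgC, Subtype.ext (uniqC g hg C hmax hgC).symm⟩
  have hcount : Countable S := by
    have hsurj : Function.Surjective (fun p : {g : G // g ≠ 1} => SC p.1 p.2) := by
      intro D; obtain ⟨g, hg, _, h⟩ := exS D; exact ⟨⟨g, hg⟩, h⟩
    exact hsurj.countable
  have hinf : Infinite S := by
    obtain ⟨c, hc⟩ : ∃ c : G, c ≠ 1 := by
      by_contra h
      push_neg at h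
      have : Subsingleton G := ⟨fun a b => (h a).trans (h b).symm⟩
      exact hnc isCyclic_of_subsingleton
    obtain ⟨d, hd⟩ : ∃ d : G, d ∉ mC c hc := by
      by_contra h
      push_neg at h
      haveI : IsCyclic ↥(mC c hc) := (maxC c hc).1
      exact hnc (isCyclic_of_surjective (mC c hc).subtype fun x => ⟨⟨x, h x⟩, rfl⟩)
    have hd1 : d ≠ 1 := fun h => hd (h ▸ (mC c hc).one_mem)
    have hdfin := htf d hd1
    have hTinf : {k : ℕ | c * d ^ k ≠ 1}.Infinite := by
      have hsub : {k : ℕ | c * d ^ k ≠ 1}ᶜ.Subsingleton := by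
        intro k₁ h₁ k₂ h₂
        simp only [Set.mem_compl_iff, Set.mem_setOf_eq, not_not] at h₁ h₂
        exact injective_pow_iff_not_isOfFinOrder.2 hdfin
          (mul_left_cancel (h₁.trans h₂.symm))
      simpa using hsub.finite.infinite_compl
    haveI : Infinite {k : ℕ // c * d ^ k ≠ 1} := hTinf.to_subtype
    refine Infinite.of_injective
      (fun k : {k : ℕ // c * d ^ k ≠ 1} => SC (c * d ^ (k : ℕ)) k.2) ?_
    rintro ⟨k₁, hk₁⟩ ⟨k₂, hk₂⟩ heq
    simp only [Subtype.mk.injEq]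
    by_contra hne
    have hE : mC (c * d ^ k₁) hk₁ = mC (c * d ^ k₂) hk₂ := congrArg Subtype.val heq
    have hx₂E : c * d ^ k₂ ∈ mC (c * d ^ k₁) hk₁ := hE ▸ memC _ hk₂
    have heval : (c * d ^ k₁)⁻¹ * (c * d ^ k₂) = d ^ ((k₂ : ℤ) - (k₁ : ℤ)) := by
      rw [zpow_sub, ← zpow_natCast d k₁, ← zpow_natCast d k₂]
      group
    have hene : (c * d ^ k₁)⁻¹ * (c * d ^ k₂) ≠ 1 := by
      intro h
      rw [heval] at h
      have := injective_zpow_iff_not_isOfFinOrder.2 hdfin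
        (h.trans (zpow_zero d).symm)
      omega
    have heE : (c * d ^ k₁)⁻¹ * (c * d ^ k₂) ∈ mC (c * d ^ k₁) hk₁ :=
      mul_mem (inv_mem (memC _ hk₁)) hx₂E
    have heD : (c * d ^ k₁)⁻¹ * (c * d ^ k₂) ∈ mC d hd1 := by
      rw [heval]; exact zpow_mem (memC d hd1) _
    have hED : mC (c * d ^ k₁) hk₁ = mC d hd1 := by
      rw [uniqC _ hene _ (maxC _ hk₁) heE, uniqC _ hene _ (maxC d hd1) heD]
    have hcD : c ∈ mC d hd1 := by
      have hx₁D : c * d ^ k₁ ∈ mC d hd1 := hED ▸ memC _ hk₁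
      have : c = (c * d ^ k₁) * (d ^ k₁)⁻¹ := by group
      rw [this]
      exact mul_mem hx₁D (inv_mem (pow_mem (memC d hd1) k₁))
    have : mC d hd1 = mC c hc := uniqC c hc _ (maxC d hd1) hcD
    exact hd (this ▸ memC d hd1)
  obtain ⟨dS⟩ := nonempty_denumerable S
  let e : S ≃ ℕ := @Denumerable.eqv S dS
  have hinfD : ∀ D : S, Infinite ↥D.1 := by
    intro D
    obtain ⟨g, hg, hgD, -⟩ := exS D
    have hnf : ¬ IsOfFinOrder (⟨g, hgD⟩ : ↥D.1) := by
      intro h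
      exact htf g hg (by simpa using D.1.subtype.isOfFinOrder h)
    exact Infinite.of_injective _ (injective_pow_iff_not_isOfFinOrder.2 hnf)
  let φ : ∀ D : S, ↥D.1 ≃* Multiplicative ℤ := fun D => cyclicIntEquiv D.2.1.1 (hinfD D)
  have subne : ∀ (D : S) (g : G) (hgD : g ∈ D.1), g ≠ 1 → (⟨g, hgD⟩ : ↥D.1) ≠ 1 :=
    fun D g hgD hg h => hg (by simpa using congrArg Subtype.val h)
  have phi_ne : ∀ (D : S) (x : ↥D.1), x ≠ 1 → (φ D x).toAdd ≠ 0 := by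
    intro D x hx h0
    exact hx ((MulEquiv.map_eq_one_iff (φ D)).1 (toAdd_eq_zero.1 h0))
  let F : G → Option (ℕ × {k : ℤ // k ≠ 0}) := fun g =>
    if hg : g = 1 then none
    else some (e (SC g hg), ⟨(φ (SC g hg) ⟨g, memC g hg⟩).toAdd,
      phi_ne (SC g hg) ⟨g, memC g hg⟩ (subne (SC g hg) g (memC g hg) hg)⟩)
  have F1 : F 1 = none := dif_pos rfl
  have spec : ∀ (g : G) (hg : g ≠ 1) (D : S) (hgD : g ∈ D.1),
      ∃ k : {k : ℤ // k ≠ 0}, F g = some (e D, k) ∧ (k : ℤ) = (φ D ⟨g, hgD⟩).toAdd := by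
    intro g hg D hgD
    have hD : SC g hg = D := Subtype.ext (uniqC g hg D.1 D.2.1 hgD).symm
    subst hD
    refine ⟨⟨(φ (SC g hg) ⟨g, hgD⟩).toAdd, phi_ne _ _ (subne _ _ _ hg)⟩, ?_, rfl⟩
    simp only [F, dif_neg hg]
  have hinj : Function.Injective F := by
    intro g h hgh
    by_cases hg : g = 1 <;> by_cases hh : h = 1
    · rw [hg, hh]
    · exfalso
      obtain ⟨b, hFh, -⟩ := spec h hh (SC h hh) (memC h hh)
      rw [hg, F1, hFh] at hgh
      exact absurd hgh (by simp)
    · exfalso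
      obtain ⟨a, hFg, -⟩ := spec g hg (SC g hg) (memC g hg)
      rw [hh, F1, hFg] at hgh
      exact absurd hgh (by simp)
    · obtain ⟨a, hFg, ha⟩ := spec g hg (SC g hg) (memC g hg)
      obtain ⟨b, hFh, hb⟩ := spec h hh (SC h hh) (memC h hh)
      have h1 : e (SC g hg) = e (SC h hh) := by
        rw [hFg, hFh] at hgh
        exact Prod.ext_iff.1 (Option.some.inj hgh) |>.1
      have hDE : SC g hg = SC h hh := e.injective h1
      have hhD : h ∈ (SC g hg).1 := by rw [hDE]; exact memC h hh
      obtain ⟨b', hFh', hb'⟩ := spec h hh (SC g hg) hhD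
      rw [hFg, hFh'] at hgh
      have h2 : a = b' := (Prod.ext_iff.1 (Option.some.inj hgh)).2
      have : (⟨g, memC g hg⟩ : ↥(SC g hg).1) = ⟨h, hhD⟩ := by
        apply (φ (SC g hg)).injective
        apply Multiplicative.toAdd.injective
        rw [← ha, ← hb', h2]
      exact congrArg Subtype.val this
  have hsurj : Function.Surjective F := by
    rintro (_ | ⟨i, k⟩)
    · exact ⟨1, F1⟩
    · set D := e.symm i with hD
      set x : ↥D.1 := (φ D).symm (Multiplicative.ofAdd k.1) with hx
      have hx1 : (x : G) ≠ 1 := by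
        intro h
        have hx0 : x = 1 := Subtype.ext (by simpa using h)
        have : Multiplicative.ofAdd k.1 = 1 := by
          rw [← (φ D).apply_symm_apply (Multiplicative.ofAdd k.1), ← hx, hx0, map_one]
        exact k.2 (by simpa using this)
      obtain ⟨b, hFb, hb⟩ := spec x.1 hx1 D x.2
      refine ⟨x.1, hFb.trans ?_⟩
      congr 1
      refine Prod.ext (by rw [hD]; exact e.apply_symm_apply i) (Subtype.ext ?_)
      rw [hb]
      have : (⟨x.1, x.2⟩ : ↥D.1) = x := rfl
      rw [this, hx, (φ D).apply_symm_apply]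
      rfl
  have adj_iff : ∀ g h : G, PGModel.Adj (F g) (F h) ↔ (powerGraph G).Adj g h := by
    intro g h
    constructor
    · rintro ⟨hne, i, a, b, hx, hy, hab⟩
      by_cases hg : g = 1
      · rw [hg, F1] at hx; exact absurd hx (by simp)
      by_cases hh : h = 1
      · rw [hh, F1] at hy; exact absurd hy (by simp)
      obtain ⟨a', hFg, ha⟩ := spec g hg (SC g hg) (memC g hg)
      have hhD : h ∈ (SC g hg).1 := by
        obtain ⟨b', hFh, hb⟩ := spec h hh (SC h hh) (memC h hh)
        rw [hFg] at hx; rw [hFh] at hy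
        have h1 : e (SC g hg) = i := (Prod.ext_iff.1 (Option.some.inj hx)).1
        have h2 : e (SC h hh) = i := (Prod.ext_iff.1 (Option.some.inj hy)).1
        have : SC g hg = SC h hh := e.injective (h1.trans h2.symm)
        rw [this]; exact memC h hh
      obtain ⟨b', hFh, hb⟩ := spec h hh (SC g hg) hhD
      rw [hFg] at hx; rw [hFh] at hy
      have ha2 : a' = a := (Prod.ext_iff.1 (Option.some.inj hx)).2
      have hb2 : b' = b := (Prod.ext_iff.1 (Option.some.inj hy)).2
      have hgh : g ≠ h := by
        intro h'
        exact hne (h' ▸ rfl)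
      rcases hab with hdvd | hdvd
      · obtain ⟨n, hn⟩ := hdvd
        have hn0 : n ≠ 0 := by
          intro h'
          rw [h', mul_zero] at hn
          exact b.2 hn
        refine ⟨hgh, n, hn0, Or.inl ?_⟩
        have : (⟨h, hhD⟩ : ↥(SC g hg).1) = (⟨g, memC g hg⟩ : ↥(SC g hg).1) ^ n := by
          apply (φ (SC g hg)).injective
          apply Multiplicative.toAdd.injective
          rw [map_zpow, toAdd_zpow, ← ha, ← hb, ha2, hb2]
          simpa [mul_comm] using hn
        simpa using congrArg Subtype.val this
      · obtain ⟨n, hn⟩ := hdvd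
        have hn0 : n ≠ 0 := by
          intro h'
          rw [h', mul_zero] at hn
          exact a.2 hn
        refine ⟨hgh, n, hn0, Or.inr ?_⟩
        have : (⟨g, memC g hg⟩ : ↥(SC g hg).1) = (⟨h, hhD⟩ : ↥(SC g hg).1) ^ n := by
          apply (φ (SC g hg)).injective
          apply Multiplicative.toAdd.injective
          rw [map_zpow, toAdd_zpow, ← ha, ← hb, ha2, hb2]
          simpa [mul_comm] using hn
        simpa using congrArg Subtype.val this
    · rintro ⟨hne, n, hn0, hcase⟩
      have hF : F g ≠ F h := fun q => hne (hinj q)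
      by_cases hg : g = 1
      · exfalso
        rcases hcase with hc | hc
        · rw [hg, one_zpow] at hc
          exact hne (hg.trans hc.symm)
        · by_cases hh : h = 1
          · exact hne (hg.trans hh.symm)
          · exact htf h hh (isOfFinOrder_of_zpow hn0 (by rw [← hc, hg]))
      by_cases hh : h = 1
      · exfalso
        rcases hcase with hc | hc
        · exact htf g hg (isOfFinOrder_of_zpow hn0 (by rw [← hc, hh]))
        · rw [hh, one_zpow] at hc
          exact hne (hc.trans hh.symm)
      rcases hcase with hc | hc
      · have hhD : h ∈ (SC g hg).1 := hc ▸ zpow_mem (memC g hg) n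
        obtain ⟨a, hFg, ha⟩ := spec g hg (SC g hg) (memC g hg)
        obtain ⟨b, hFh, hb⟩ := spec h hh _ hhD
        refine ⟨hF, e (SC g hg), a, b, hFg, hFh, Or.inl ⟨n, ?_⟩⟩
        have hsub : (⟨h, hhD⟩ : ↥(SC g hg).1) = (⟨g, memC g hg⟩ : ↥(SC g hg).1) ^ n :=
          Subtype.ext (by simpa using hc)
        rw [ha, hb, hsub, map_zpow, toAdd_zpow, smul_eq_mul, mul_comm]
      · have hgD : g ∈ (SC h hh).1 := hc ▸ zpow_mem (memC h hh) n
        obtain ⟨b, hFh, hb⟩ := spec h hh (SC h hh) (memC h hh)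
        obtain ⟨a, hFg, ha⟩ := spec g hg _ hgD
        refine ⟨hF, e (SC h hh), a, b, hFg, hFh, Or.inr ⟨n, ?_⟩⟩
        have hsub : (⟨g, hgD⟩ : ↥(SC h hh).1) = (⟨h, memC h hh⟩ : ↥(SC h hh).1) ^ n :=
          Subtype.ext (by simpa using hc)
        rw [ha, hb, hsub, map_zpow, toAdd_zpow, smul_eq_mul, mul_comm]
  exact ⟨⟨Equiv.ofBijective F ⟨hinj, hsurj⟩, fun {a b} => adj_iff a b⟩⟩

/-! ### The groups `ℤ^m` satisfy the hypotheses -/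

lemma pi_htf (m : ℕ) : ∀ g : Multiplicative (Fin m → ℤ), g ≠ 1 → ¬ IsOfFinOrder g := by
  intro g hg hfin
  obtain ⟨n, hn, hpow⟩ := isOfFinOrder_iff_pow_eq_one.1 hfin
  apply hg
  have h1 : (n : ℤ) • g.toAdd = 0 := by
    have := congrArg Multiplicative.toAdd hpow
    simpa [toAdd_pow, natCast_zsmul] using this
  rcases smul_eq_zero.1 h1 with h | h
  · exact absurd h (by exact_mod_cast hn.ne')
  · exact toAdd_eq_zero.1 h

lemma pi_hnc (m : ℕ) (hm : 2 ≤ m) : ¬ IsCyclic (Multiplicative (Fin m → ℤ)) := by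
  intro h
  obtain ⟨v, hv⟩ := h.exists_generator
  set w := v.toAdd with hw
  have hne : (⟨0, by omega⟩ : Fin m) ≠ ⟨1, by omega⟩ := by
    intro h'
    exact absurd (congrArg Fin.val h') (by simp)
  obtain ⟨p, hp⟩ := Subgroup.mem_zpowers_iff.1
    (hv (Multiplicative.ofAdd (Pi.single (⟨0, by omega⟩ : Fin m) (1 : ℤ))))
  obtain ⟨q, hq⟩ := Subgroup.mem_zpowers_iff.1
    (hv (Multiplicative.ofAdd (Pi.single (⟨1, by omega⟩ : Fin m) (1 : ℤ))))
  have hp' : p • w = Pi.single (⟨0, by omega⟩ : Fin m) (1 : ℤ) := by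
    have := congrArg Multiplicative.toAdd hp
    simpa [toAdd_zpow] using this
  have hq' : q • w = Pi.single (⟨1, by omega⟩ : Fin m) (1 : ℤ) := by
    have := congrArg Multiplicative.toAdd hq
    simpa [toAdd_zpow] using this
  have h0 : p * w ⟨1, by omega⟩ = 0 := by
    have h := congrArg (fun f => f (⟨1, by omega⟩ : Fin m)) hp'
    simp only [Pi.smul_apply, smul_eq_mul] at h
    rw [Pi.single_eq_of_ne (Ne.symm hne)] at h
    exact h
  have h1 : q * w ⟨1, by omega⟩ = 1 := by
    have h := congrArg (fun f => f (⟨1, by omega⟩ : Fin m)) hq'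
    simp only [Pi.smul_apply, smul_eq_mul, Pi.single_eq_same] at h
    exact h
  have hwne : w ⟨1, by omega⟩ ≠ 0 := by
    intro h'
    rw [h', mul_zero] at h1
    exact one_ne_zero h1.symm
  have hp0 : p = 0 := by
    rcases mul_eq_zero.1 h0 with h' | h'
    · exact h'
    · exact absurd h' hwne
  rw [hp0, zero_smul] at hp'
  have := congrArg (fun f => f (⟨0, by omega⟩ : Fin m)) hp'
  simp only [Pi.zero_apply, Pi.single_eq_same] at this
  exact one_ne_zero this.symm

lemma pi_hu (m : ℕ) : ∀ g : Multiplicative (Fin m → ℤ), g ≠ 1 →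
    ∃! C : Subgroup (Multiplicative (Fin m → ℤ)), IsMaxCyclic C ∧ g ∈ C := by
  intro g hg
  set a := g.toAdd with ha_def
  have ha : a ≠ 0 := fun h => hg (toAdd_eq_zero.1 h)
  set d : ℤ := Finset.univ.gcd a with hd_def
  have hdvd : ∀ i, d ∣ a i := fun i => Finset.gcd_dvd (Finset.mem_univ i)
  set a₀ : Fin m → ℤ := fun i => a i / d with ha₀_def
  have hda₀ : d • a₀ = a := by
    funext i
    simp only [Pi.smul_apply, smul_eq_mul, ha₀_def]
    exact Int.mul_ediv_cancel' (hdvd i)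
  set g₀ := Multiplicative.ofAdd a₀ with hg₀
  have hgmem : g ∈ Subgroup.zpowers g₀ := by
    refine Subgroup.mem_zpowers_iff.2 ⟨d, ?_⟩
    apply Multiplicative.toAdd.injective
    rw [toAdd_zpow]; exact hda₀
  have key : ∀ D : Subgroup (Multiplicative (Fin m → ℤ)), IsCyclic ↥D → g ∈ D →
      D ≤ Subgroup.zpowers g₀ := by
    intro D hcyc hgD
    obtain ⟨w, rfl⟩ := eq_zpowers_of_isCyclic D hcyc
    obtain ⟨k, hk⟩ := Subgroup.mem_zpowers_iff.1 hgD
    have hka : k • w.toAdd = a := by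
      have := congrArg Multiplicative.toAdd hk
      simpa [toAdd_zpow] using this
    have hk0 : k ≠ 0 := by
      rintro rfl
      rw [zero_smul] at hka
      exact ha hka.symm
    have hkd : k ∣ d := Finset.dvd_gcd fun i _ => ⟨w.toAdd i, by rw [← hka]; simp⟩
    obtain ⟨cc, hcc⟩ := hkd
    have hwcc : w.toAdd = cc • a₀ := by
      apply smul_right_injective (Fin m → ℤ) hk0
      show k • Multiplicative.toAdd w = k • (cc • a₀)
      rw [hka, ← mul_smul, ← hcc, hda₀]
    rw [Subgroup.zpowers_le]
    refine Subgroup.mem_zpowers_iff.2 ⟨cc, ?_⟩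
    apply Multiplicative.toAdd.injective
    rw [toAdd_zpow]; exact hwcc.symm
  refine ⟨Subgroup.zpowers g₀,
    ⟨⟨_root_.isCyclic_zpowers g₀, fun D hD hle => le_antisymm hle (key D hD (hle hgmem))⟩, hgmem⟩, ?_⟩
  rintro C ⟨⟨hCc, hCmax⟩, hgC⟩
  exact hCmax _ (_root_.isCyclic_zpowers g₀) (key C hCc hgC)

/-- `addPowerGraph A` is isomorphic to `powerGraph (Multiplicative A)`. -/
def addMulIso (A : Type*) [AddGroup A] : addPowerGraph A ≃g powerGraph (Multiplicative A) := by
  refine ⟨Multiplicative.ofAdd, ?_⟩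
  intro x y
  constructor
  · rintro ⟨hne, n, hn, hcase⟩
    refine ⟨fun h => hne (congrArg Multiplicative.ofAdd h), n, hn, ?_⟩
    rcases hcase with h | h
    · exact Or.inl (by have := congrArg Multiplicative.toAdd h; simpa [toAdd_zpow] using this)
    · exact Or.inr (by have := congrArg Multiplicative.toAdd h; simpa [toAdd_zpow] using this)
  · rintro ⟨hne, n, hn, hcase⟩
    refine ⟨fun h => hne (congrArg Multiplicative.toAdd h), n, hn, ?_⟩
    rcases hcase with h | h
    · exact Or.inl (by apply Multiplicative.toAdd.injective; simpa [toAdd_zpow] using h)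
    · exact Or.inr (by apply Multiplicative.toAdd.injective; simpa [toAdd_zpow] using h)

/-- Any two countable, non-cyclic, torsion-free groups in which every
non-identity element lies in a unique maximal cyclic subgroup have isomorphic
power graphs; in particular the groups `ℤⁿ` for `n ≥ 2` have pairwise isomorphic
power graphs. -/
theorem stmt_13 :
    (∀ (G₁ : Type u) (G₂ : Type v) [Group G₁] [Group G₂] [Countable G₁] [Countable G₂],
      (∀ g : G₁, g ≠ 1 → ¬ IsOfFinOrder g) →
      (∀ g : G₂, g ≠ 1 → ¬ IsOfFinOrder g) →
      ¬ IsCyclic G₁ → ¬ IsCyclic G₂ →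
      (∀ g : G₁, g ≠ 1 → ∃! C : Subgroup G₁, IsMaxCyclic C ∧ g ∈ C) →
      (∀ g : G₂, g ≠ 1 → ∃! C : Subgroup G₂, IsMaxCyclic C ∧ g ∈ C) →
      Nonempty (powerGraph G₁ ≃g powerGraph G₂)) ∧
    (∀ m n : ℕ, 2 ≤ m → 2 ≤ n →
      Nonempty (addPowerGraph (Fin m → ℤ) ≃g addPowerGraph (Fin n → ℤ))) := by
  constructor
  · intro G₁ G₂ _ _ _ _ htf1 htf2 hnc1 hnc2 hu1 hu2
    obtain ⟨f₁⟩ := iso_model G₁ htf1 hnc1 hu1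
    obtain ⟨f₂⟩ := iso_model G₂ htf2 hnc2 hu2
    exact ⟨f₁.trans f₂.symm⟩
  · intro m n hm hn
    haveI : ∀ j : ℕ, Countable (Multiplicative (Fin j → ℤ)) :=
      fun j => Multiplicative.toAdd.injective.countable
    obtain ⟨f₁⟩ := iso_model (Multiplicative (Fin m → ℤ)) (pi_htf m) (pi_hnc m hm) (pi_hu m)
    obtain ⟨f₂⟩ := iso_model (Multiplicative (Fin n → ℤ)) (pi_htf n) (pi_hnc n hn) (pi_hu n)
    exact ⟨(((addMulIso _).trans f₁).trans f₂.symm).trans (addMulIso _).symm⟩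
end

section
/- For a nonzero rational number a, define φ_a : ℚ → ℚ by φ_a(x) = a²/x for x ≠ 0 and φ_a(0) = 0. Then φ_a is a bijection which is an automorphism of the power graph P(ℚ) of the additive group of rationals (x and y are adjacent in P(ℚ) if and only if φ_a(x) and φ_a(y) are), φ_a reverses all arcs of the directed power graph (there is an arc x → y if and only if there is an arc φ_a(y) → φ_a(x)), and φ_a maps the out-neighbourhood O(a) bijectively onto the in-neighbourhood I(a). -/
/-- The map `φ_a : ℚ → ℚ`, `x ↦ a²/x` for `x ≠ 0`, `0 ↦ 0`. -/
def phi (a : ℚ) (x : ℚ) : ℚ := if x = 0 then 0 else a ^ 2 / x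

/-- The out-neighbourhood of `x` in the directed power graph of `ℚ`. -/
def outSetQ (x : ℚ) : Set ℚ := {y | addPowArc x y}

/-- The in-neighbourhood of `x` in the directed power graph of `ℚ`. -/
def inSetQ (x : ℚ) : Set ℚ := {y | addPowArc y x}

lemma phi_invol (a : ℚ) (ha : a ≠ 0) : Function.Involutive (phi a) := by
  intro x
  by_cases hx : x = 0
  · simp [phi, hx]
  · have h1 : phi a x = a ^ 2 / x := by simp [phi, hx]
    have h2 : a ^ 2 / x ≠ 0 := by
      apply div_ne_zero (pow_ne_zero _ ha) hx
    rw [h1, phi, if_neg h2]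
    field_simp

lemma phi_ne_zero (a : ℚ) (ha : a ≠ 0) {x : ℚ} (hx : x ≠ 0) : phi a x ≠ 0 := by
  simp only [phi, if_neg hx]
  exact div_ne_zero (pow_ne_zero _ ha) hx

lemma arc_rev (a : ℚ) (ha : a ≠ 0) (x y : ℚ) (h : addPowArc x y) :
    addPowArc (phi a y) (phi a x) := by
  obtain ⟨hxy, n, hn, hy⟩ := h
  have hnz : (n : ℚ) ≠ 0 := Int.cast_ne_zero.mpr hn
  have hx : x ≠ 0 := by
    rintro rfl; apply hxy; rw [hy]; simp
  have hy0 : y ≠ 0 := by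
    rintro rfl
    rw [zsmul_eq_mul] at hy
    exact hx (by
      have := hy.symm
      rcases mul_eq_zero.mp (by linarith [this] : (n : ℚ) * x = 0) with h | h
      · exact absurd h hnz
      · exact h)
  refine ⟨?_, n, hn, ?_⟩
  · intro heq
    exact hxy (((phi_invol a ha).injective heq).symm)
  · rw [zsmul_eq_mul] at hy
    simp only [phi, if_neg hx, if_neg hy0, zsmul_eq_mul, hy]
    rw [if_neg (mul_ne_zero hnz hx)]
    field_simp

lemma phi_self (a : ℚ) (ha : a ≠ 0) : phi a a = a := by
  simp [phi, if_neg ha, sq]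

/-- For nonzero `a : ℚ`, the map `φ_a` is a bijection, an automorphism of the
power graph `P(ℚ)`, reverses all arcs of the directed power graph, and maps
`O(a)` bijectively onto `I(a)`. -/
theorem stmt_14 (a : ℚ) (ha : a ≠ 0) :
    Function.Bijective (phi a) ∧
      (∀ x y : ℚ, (addPowerGraph ℚ).Adj x y ↔
        (addPowerGraph ℚ).Adj (phi a x) (phi a y)) ∧
      (∀ x y : ℚ, addPowArc x y ↔ addPowArc (phi a y) (phi a x)) ∧
      Set.BijOn (phi a) (outSetQ a) (inSetQ a) := by
  have hinv := phi_invol a ha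
  have harc : ∀ x y : ℚ, addPowArc x y ↔ addPowArc (phi a y) (phi a x) := by
    intro x y
    constructor
    · exact arc_rev a ha x y
    · intro h
      have := arc_rev a ha _ _ h
      rwa [hinv, hinv] at this
  have hadj : ∀ x y : ℚ, (addPowerGraph ℚ).Adj x y ↔ addPowArc x y ∨ addPowArc y x := by
    intro x y
    constructor
    · rintro ⟨hxy, n, hn, h | h⟩
      · exact Or.inl ⟨hxy, n, hn, h⟩
      · exact Or.inr ⟨hxy.symm, n, hn, h⟩
    · rintro (⟨hxy, n, hn, h⟩ | ⟨hxy, n, hn, h⟩)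
      · exact ⟨hxy, n, hn, Or.inl h⟩
      · exact ⟨hxy.symm, n, hn, Or.inr h⟩
  refine ⟨hinv.bijective, ?_, harc, ?_⟩
  · intro x y
    rw [hadj, hadj]
    rw [harc x y, harc y x]
    tauto
  · -- BijOn
    have hmaps : ∀ x, x ∈ outSetQ a → phi a x ∈ inSetQ a := by
      intro x hx
      have := (harc a x).mp hx
      rwa [phi_self a ha] at this
    refine ⟨hmaps, hinv.injective.injOn, ?_⟩
    intro z hz
    refine ⟨phi a z, ?_, hinv z⟩
    have h1 : addPowArc z a := hz
    have h2 := (harc z a).mp h1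
    rwa [phi_self a ha] at h2
end
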